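/- arXiv:1203.2455 — 3 statements merged into one kernel-verified Lean document; each statement's English description precedes it below -/
import Mathlib

section
/- Let A ⋈ H be a double cross product of Hopf algebras and σ a coquasitriangular structure on A ⋈ H. Define p(a, b) = σ(a ⊗ 1, b ⊗ 1), τ(h, g) = σ(1 ⊗ h, 1 ⊗ g), u(a, h) = σ(a ⊗ 1, 1 ⊗ h), v(h, a) = σ(1 ⊗ h, a ⊗ 1). Then (A, p) and (H, τ) are coquasitriangular Hopf algebras, u is a skew pairing on (A, H), v is a skew pairing on (H, A), and σ(a ⊗ h, b ⊗ g) = u(a₍₁₎, g₍₁₎) p(a₍₂₎, b₍₁₎) τ(h₍₁₎, g₍₂₎) v(h₍₂₎, b₍₂₎) for all a, b ∈ A, h, g ∈ H. -/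
open TensorProduct Coalgebra LinearMap Finset HopfAlgebra

noncomputable section

variable {k : Type} [Field k]

/-- Representations of `comul a` with index type in `Type 0`. -/
structure Repr0 (k : Type) [CommSemiring k] {A : Type} [AddCommMonoid A] [Module k A]
    [CoalgebraStruct k A] (a : A) where
  {ι : Type}
  (index : Finset ι)
  (left : ι → A)
  (right : ι → A)
  (eq : ∑ i ∈ index, left i ⊗ₜ[k] right i = CoalgebraStruct.comul a)

/-- A skew pairing `λ : A ⊗ H → k` (given as a bilinear map), satisfying (BR1)–(BR4),
with Sweedler sums expressed via arbitrary representations of the comultiplication. -/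
structure IsSkewPairing {A H : Type} [Ring A] [Ring H]
    [Bialgebra k A] [Bialgebra k H] (lam : A →ₗ[k] H →ₗ[k] k) : Prop where
  br1 : ∀ (x y : A) (z : H) (rz : Repr0 k z),
    lam (x * y) z = ∑ i ∈ rz.index, lam x (rz.left i) * lam y (rz.right i)
  br2 : ∀ z : H, lam 1 z = counit (R := k) z
  br3 : ∀ (x : A) (l z : H) (rx : Repr0 k x),
    lam x (l * z) = ∑ i ∈ rx.index, lam (rx.left i) z * lam (rx.right i) l
  br4 : ∀ y : A, lam y 1 = counit (R := k) y

/-- A coquasitriangular (braided) structure on a bialgebra `H` : (BR1)–(BR5). -/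
structure IsCQT {H : Type} [Ring H] [Bialgebra k H]
    (p : H →ₗ[k] H →ₗ[k] k) extends IsSkewPairing p : Prop where
  br5 : ∀ (x y : H) (rx : Repr0 k x) (ry : Repr0 k y),
    ∑ i ∈ rx.index, ∑ j ∈ ry.index, p (rx.left i) (ry.left j) • (rx.right i * ry.right j)
    = ∑ i ∈ rx.index, ∑ j ∈ ry.index, p (rx.right i) (ry.right j) • (ry.left j * rx.left i)

/-- Coquasitriangularity (BR1)–(BR5) for a coalgebra `D` equipped with a (not necessarily
associative, not necessarily typeclass-registered) multiplication `mul` and unit `one`. -/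
structure IsCQTMul {D : Type} [AddCommGroup D] [Module k D] [Coalgebra k D]
    (mul : D →ₗ[k] D →ₗ[k] D) (one : D) (σ : D →ₗ[k] D →ₗ[k] k) : Prop where
  br1 : ∀ (x y z : D) (rz : Repr0 k z),
    σ (mul x y) z = ∑ i ∈ rz.index, σ x (rz.left i) * σ y (rz.right i)
  br2 : ∀ z : D, σ one z = counit (R := k) z
  br3 : ∀ (x l z : D) (rx : Repr0 k x),
    σ x (mul l z) = ∑ i ∈ rx.index, σ (rx.left i) z * σ (rx.right i) l
  br4 : ∀ y : D, σ y one = counit (R := k) y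
  br5 : ∀ (x y : D) (rx : Repr0 k x) (ry : Repr0 k y),
    ∑ i ∈ rx.index, ∑ j ∈ ry.index, σ (rx.left i) (ry.left j) • mul (rx.right i) (ry.right j)
    = ∑ i ∈ rx.index, ∑ j ∈ ry.index, σ (rx.right i) (ry.right j) • mul (ry.left j) (rx.left i)

/-- A matched pair of bialgebras `(A, H, ⊳, ⊲)` : `lact = ⊳ : H ⊗ A → A` is a left
`H`-module coalgebra structure, `ract = ⊲ : H ⊗ A → H` is a right `A`-module coalgebra
structure, together with the matched pair compatibility conditions. -/
structure IsMatchedPair {A H : Type} [Ring A] [Ring H] [Bialgebra k A] [Bialgebra k H]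
    (lact : H →ₗ[k] A →ₗ[k] A) (ract : H →ₗ[k] A →ₗ[k] H) : Prop where
  ract_unit : ∀ h : H, ract h 1 = h
  ract_act : ∀ (h : H) (a b : A), ract h (a * b) = ract (ract h a) b
  ract_comul : ∀ (h : H) (a : A) (rh : Repr0 k h) (ra : Repr0 k a),
    comul (R := k) (ract h a)
      = ∑ i ∈ rh.index, ∑ j ∈ ra.index,
          ract (rh.left i) (ra.left j) ⊗ₜ[k] ract (rh.right i) (ra.right j)
  ract_counit : ∀ (h : H) (a : A),
    counit (R := k) (ract h a) = counit (R := k) h * counit (R := k) a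
  lact_unit : ∀ a : A, lact 1 a = a
  lact_act : ∀ (g h : H) (a : A), lact (g * h) a = lact g (lact h a)
  lact_comul : ∀ (h : H) (a : A) (rh : Repr0 k h) (ra : Repr0 k a),
    comul (R := k) (lact h a)
      = ∑ i ∈ rh.index, ∑ j ∈ ra.index,
          lact (rh.left i) (ra.left j) ⊗ₜ[k] lact (rh.right i) (ra.right j)
  lact_counit : ∀ (h : H) (a : A),
    counit (R := k) (lact h a) = counit (R := k) h * counit (R := k) a
  lact_mul : ∀ (h : H) (a b : A) (rh : Repr0 k h) (ra : Repr0 k a),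
    lact h (a * b) = ∑ i ∈ rh.index, ∑ j ∈ ra.index,
      lact (rh.left i) (ra.left j) * lact (ract (rh.right i) (ra.right j)) b
  mul_ract : ∀ (g h : H) (a : A) (rh : Repr0 k h) (ra : Repr0 k a),
    ract (g * h) a = ∑ i ∈ rh.index, ∑ j ∈ ra.index,
      ract g (lact (rh.left i) (ra.left j)) * ract (rh.right i) (ra.right j)
  lact_one : ∀ h : H, lact h 1 = counit (R := k) h • (1 : A)
  one_ract : ∀ a : A, ract 1 a = counit (R := k) a • (1 : H)
  sym : ∀ (h : H) (a : A) (rh : Repr0 k h) (ra : Repr0 k a),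
    ∑ i ∈ rh.index, ∑ j ∈ ra.index,
        ract (rh.left i) (ra.left j) ⊗ₜ[k] lact (rh.right i) (ra.right j)
    = ∑ i ∈ rh.index, ∑ j ∈ ra.index,
        ract (rh.right i) (ra.right j) ⊗ₜ[k] lact (rh.left i) (ra.left j)

/-- `mulD` is the double cross product multiplication
`(a ⊗ h)(b ⊗ g) = a(h₍₁₎ ⊳ b₍₁₎) ⊗ (h₍₂₎ ⊲ b₍₂₎)g` on `A ⊗ H`. -/
def IsDCPMul {A H : Type} [Ring A] [Ring H] [Bialgebra k A] [Bialgebra k H]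
    (lact : H →ₗ[k] A →ₗ[k] A) (ract : H →ₗ[k] A →ₗ[k] H)
    (mulD : A ⊗[k] H →ₗ[k] A ⊗[k] H →ₗ[k] A ⊗[k] H) : Prop :=
  ∀ (a b : A) (h g : H) (rh : Repr0 k h) (rb : Repr0 k b),
    mulD (a ⊗ₜ[k] h) (b ⊗ₜ[k] g) = ∑ i ∈ rh.index, ∑ j ∈ rb.index,
      (a * lact (rh.left i) (rb.left j)) ⊗ₜ[k] (ract (rh.right i) (rb.right j) * g)

/-- The right action `h ⊲ a = h₍₂₎ λ⁻¹(h₍₁₎, a₍₁₎) λ(h₍₃₎, a₍₂₎)` induced by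
a skew pairing `λ : H ⊗ A → k` (where `λ⁻¹ = λ ∘ (S_H ⊗ id)`). -/
def IsQDRact {A H : Type} [Ring A] [Ring H] [HopfAlgebra k A] [HopfAlgebra k H]
    (lam : H →ₗ[k] A →ₗ[k] k) (ract : H →ₗ[k] A →ₗ[k] H) : Prop :=
  ∀ (h : H) (a : A) (rh : Repr0 k h)
    (rh1 : ∀ i : rh.ι, Repr0 k (rh.left i)) (ra : Repr0 k a),
    ract h a = ∑ i ∈ rh.index, ∑ j ∈ (rh1 i).index, ∑ l ∈ ra.index,
      (lam (antipode (R := k) ((rh1 i).left j)) (ra.left l) * lam (rh.right i) (ra.right l))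
        • (rh1 i).right j

/-- The left action `h ⊳ a = a₍₂₎ λ⁻¹(h₍₁₎, a₍₁₎) λ(h₍₂₎, a₍₃₎)` induced by
a skew pairing `λ : H ⊗ A → k`. -/
def IsQDLact {A H : Type} [Ring A] [Ring H] [HopfAlgebra k A] [HopfAlgebra k H]
    (lam : H →ₗ[k] A →ₗ[k] k) (lact : H →ₗ[k] A →ₗ[k] A) : Prop :=
  ∀ (h : H) (a : A) (rh : Repr0 k h) (ra : Repr0 k a)
    (ra1 : ∀ l : ra.ι, Repr0 k (ra.left l)),
    lact h a = ∑ i ∈ rh.index, ∑ l ∈ ra.index, ∑ j ∈ (ra1 l).index,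
      (lam (antipode (R := k) (rh.left i)) ((ra1 l).left j) * lam (rh.right i) (ra.right l))
        • (ra1 l).right j

/-- `σ(a ⊗ h, b ⊗ g) = u(a₍₁₎, g₍₁₎) p(a₍₂₎, b₍₁₎) τ(h₍₁₎, g₍₂₎) v(h₍₂₎, b₍₂₎)`. -/
def IsSigma {A H : Type} [Ring A] [Ring H] [Bialgebra k A] [Bialgebra k H]
    (u : A →ₗ[k] H →ₗ[k] k) (p : A →ₗ[k] A →ₗ[k] k)
    (τ : H →ₗ[k] H →ₗ[k] k) (v : H →ₗ[k] A →ₗ[k] k)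
    (σ : A ⊗[k] H →ₗ[k] A ⊗[k] H →ₗ[k] k) : Prop :=
  ∀ (a b : A) (h g : H) (ra : Repr0 k a) (rb : Repr0 k b)
    (rh : Repr0 k h) (rg : Repr0 k g),
    σ (a ⊗ₜ[k] h) (b ⊗ₜ[k] g) = ∑ m ∈ ra.index, ∑ n ∈ rb.index, ∑ i ∈ rh.index, ∑ j ∈ rg.index,
      u (ra.left m) (rg.left j) * p (ra.right m) (rb.left n)
        * τ (rh.left i) (rg.right j) * v (rh.right i) (rb.right n)



/-! ### Auxiliary machinery -/

section Aux

/-- Representation of a pure tensor built from representations of the factors. -/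
def tmulRepr {k A H : Type} [CommSemiring k] [AddCommMonoid A] [AddCommMonoid H]
    [Module k A] [Module k H] [CoalgebraStruct k A] [CoalgebraStruct k H]
    {a : A} {h : H} (ra : Repr0 k a) (rh : Repr0 k h) : Repr0 k (a ⊗ₜ[k] h) where
  index := ra.index ×ˢ rh.index
  left := fun p => ra.left p.1 ⊗ₜ[k] rh.left p.2
  right := fun p => ra.right p.1 ⊗ₜ[k] rh.right p.2
  eq := by
    rw [Finset.sum_product]
    show _ = CoalgebraStruct.comul (a ⊗ₜ[k] h)
    simp only [TensorProduct.comul_tmul, LinearMap.comp_apply,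
      TensorProduct.map_tmul, ← ra.eq, ← rh.eq, TensorProduct.sum_tmul,
      TensorProduct.tmul_sum, map_sum]
    rw [Finset.sum_comm]
    simp [TensorProduct.AlgebraTensorModule.tensorTensorTensorComm_tmul]

/-- An arbitrary representation as a `Repr0`. -/
def arbRepr (k : Type) [CommSemiring k] {A : Type} [AddCommMonoid A] [Module k A]
    [CoalgebraStruct k A] (a : A) : Repr0 k a where
  ι := A × A
  index := (ℛ k a).index
  left := (ℛ k a).left
  right := (ℛ k a).right
  eq := (ℛ k a).eq

/-- The canonical representation of `1` in a bialgebra. -/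
def oneRepr (k A : Type) [CommSemiring k] [Semiring A] [Bialgebra k A] : Repr0 k (1 : A) where
  index := (Finset.univ : Finset Unit)
  left := fun _ => 1
  right := fun _ => 1
  eq := by simp [Bialgebra.comul_one, Algebra.TensorProduct.one_def]

lemma repr_sum_counit_smul_right {k A : Type} [CommSemiring k] [AddCommMonoid A] [Module k A]
    [Coalgebra k A] {M : Type} [AddCommMonoid M] [Module k M] {a : A}
    (r : Repr0 k a) (f : A →ₗ[k] M) :
    ∑ i ∈ r.index, counit (R := k) (r.left i) • f (r.right i) = f a := by
  have h1 : TensorProduct.map (counit (R := k)) f (CoalgebraStruct.comul a) = 1 ⊗ₜ[k] f a := by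
    rw [← LinearMap.lTensor_comp_rTensor, LinearMap.comp_apply, Coalgebra.rTensor_counit_comul,
      LinearMap.lTensor_tmul]
  have h2 := congrArg (TensorProduct.lid k M) h1
  rw [← r.eq, map_sum] at h2
  simp only [map_sum, TensorProduct.map_tmul, TensorProduct.lid_tmul, one_smul] at h2
  exact h2

lemma repr_sum_counit_smul_left {k A : Type} [CommSemiring k] [AddCommMonoid A] [Module k A]
    [Coalgebra k A] {M : Type} [AddCommMonoid M] [Module k M] {a : A}
    (r : Repr0 k a) (f : A →ₗ[k] M) :
    ∑ i ∈ r.index, counit (R := k) (r.right i) • f (r.left i) = f a := by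
  have h1 : TensorProduct.map f (counit (R := k)) (CoalgebraStruct.comul a) = f a ⊗ₜ[k] 1 := by
    rw [← LinearMap.rTensor_comp_lTensor, LinearMap.comp_apply, Coalgebra.lTensor_counit_comul,
      LinearMap.rTensor_tmul]
  have h2 := congrArg (TensorProduct.rid k M) h1
  rw [← r.eq, map_sum] at h2
  simp only [map_sum, TensorProduct.map_tmul, TensorProduct.rid_tmul, one_smul] at h2
  exact h2

section MulD

variable {k A H : Type} [Field k] [Ring A] [Ring H] [HopfAlgebra k A] [HopfAlgebra k H]
    (lact : H →ₗ[k] A →ₗ[k] A) (ract : H →ₗ[k] A →ₗ[k] H)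
    (hmp : IsMatchedPair lact ract)
    (mulD : A ⊗[k] H →ₗ[k] A ⊗[k] H →ₗ[k] A ⊗[k] H) (hmulD : IsDCPMul lact ract mulD)

include hmp hmulD

lemma mulD_one_left (a b : A) (g : H) :
    mulD (a ⊗ₜ[k] (1 : H)) (b ⊗ₜ[k] g) = (a * b) ⊗ₜ[k] g := by
  rw [hmulD a b 1 g (oneRepr k H) (arbRepr k b)]
  have key := repr_sum_counit_smul_left (arbRepr k b)
    (((TensorProduct.mk k A H).flip g) ∘ₗ (LinearMap.mulLeft k a))
  simp only [LinearMap.comp_apply, LinearMap.mulLeft_apply, TensorProduct.mk_apply,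
    LinearMap.flip_apply] at key
  simp only [oneRepr, Finset.univ_unique, Finset.sum_singleton, hmp.lact_unit, hmp.one_ract,
    smul_mul_assoc, one_mul, TensorProduct.tmul_smul]
  exact key

lemma mulD_one_right (a : A) (h g : H) :
    mulD (a ⊗ₜ[k] h) ((1 : A) ⊗ₜ[k] g) = a ⊗ₜ[k] (h * g) := by
  rw [hmulD a 1 h g (arbRepr k h) (oneRepr k A)]
  have key := repr_sum_counit_smul_right (arbRepr k h)
    ((TensorProduct.mk k A H a) ∘ₗ (LinearMap.mulRight k g))
  simp only [LinearMap.comp_apply, LinearMap.mulRight_apply, TensorProduct.mk_apply] at key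
  simp only [oneRepr, Finset.univ_unique, Finset.sum_singleton, hmp.lact_one, hmp.ract_unit,
    mul_smul_comm, mul_one, TensorProduct.smul_tmul']
  exact key

end MulD

/-- Projection `A ⊗ H → A`, `a ⊗ h ↦ ε(h) • a`. -/
def piA (k A H : Type) [CommSemiring k] [AddCommMonoid A] [AddCommMonoid H] [Module k A]
    [Module k H] [Coalgebra k H] : A ⊗[k] H →ₗ[k] A :=
  (TensorProduct.rid k A).toLinearMap ∘ₗ (LinearMap.lTensor A (counit (R := k)))

lemma piA_tmul {k A H : Type} [CommSemiring k] [AddCommMonoid A] [AddCommMonoid H] [Module k A]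
    [Module k H] [Coalgebra k H] (a : A) (h : H) :
    piA k A H (a ⊗ₜ[k] h) = counit (R := k) h • a := by
  simp [piA]

/-- Projection `A ⊗ H → H`, `a ⊗ h ↦ ε(a) • h`. -/
def piH (k A H : Type) [CommSemiring k] [AddCommMonoid A] [AddCommMonoid H] [Module k A]
    [Module k H] [Coalgebra k A] : A ⊗[k] H →ₗ[k] H :=
  (TensorProduct.lid k H).toLinearMap ∘ₗ (LinearMap.rTensor H (counit (R := k)))

lemma piH_tmul {k A H : Type} [CommSemiring k] [AddCommMonoid A] [AddCommMonoid H] [Module k A]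
    [Module k H] [Coalgebra k A] (a : A) (h : H) :
    piH k A H (a ⊗ₜ[k] h) = counit (R := k) a • h := by
  simp [piH]

lemma counit_tmul_eq {k A H : Type} [CommSemiring k] [AddCommMonoid A] [AddCommMonoid H]
    [Module k A] [Module k H] [CoalgebraStruct k A] [CoalgebraStruct k H] (a : A) (h : H) :
    counit (R := k) (a ⊗ₜ[k] h) = counit (R := k) a * counit (R := k) h := by
  simp [mul_comm]

lemma final_reorder {k : Type} [CommRing k] {ι₁ ι₂ ι₃ ι₄ : Type}
    (s1 : Finset ι₁) (s2 : Finset ι₂) (s3 : Finset ι₃) (s4 : Finset ι₄)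
    (f1 : ι₁ → ι₄ → k) (f2 : ι₁ → ι₂ → k) (f3 : ι₃ → ι₄ → k) (f4 : ι₃ → ι₂ → k) :
    ∑ n ∈ s2, ∑ j ∈ s4, (∑ m ∈ s1, f1 m j * f2 m n) * (∑ i ∈ s3, f3 i j * f4 i n)
    = ∑ m ∈ s1, ∑ n ∈ s2, ∑ i ∈ s3, ∑ j ∈ s4, f1 m j * f2 m n * f3 i j * f4 i n := by
  simp_rw [Finset.sum_mul_sum, ← mul_assoc]
  simp_rw [Finset.sum_comm (s := s4) (t := s1)]
  rw [Finset.sum_comm (s := s2) (t := s1)]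
  simp_rw [Finset.sum_comm (s := s4) (t := s3)]

end Aux

/-- any coquasitriangular structure `σ` on a double cross product `A ⋈ H`
restricts to coquasitriangular structures `p`, `τ` on `A`, `H`, skew pairings `u`, `v`,
and `σ` is recovered by the formula
`σ(a ⊗ h, b ⊗ g) = u(a₍₁₎, g₍₁₎) p(a₍₂₎, b₍₁₎) τ(h₍₁₎, g₍₂₎) v(h₍₂₎, b₍₂₎)`. -/
theorem double_cross_product_cqt_decomposition {k A H : Type} [Field k] [Ring A] [Ring H]
    [HopfAlgebra k A] [HopfAlgebra k H]
    (lact : H →ₗ[k] A →ₗ[k] A) (ract : H →ₗ[k] A →ₗ[k] H)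
    (hmp : IsMatchedPair lact ract)
    (mulD : A ⊗[k] H →ₗ[k] A ⊗[k] H →ₗ[k] A ⊗[k] H) (hmulD : IsDCPMul lact ract mulD)
    (σ : A ⊗[k] H →ₗ[k] A ⊗[k] H →ₗ[k] k)
    (hσ : IsCQTMul mulD ((1 : A) ⊗ₜ[k] (1 : H)) σ)
    (p : A →ₗ[k] A →ₗ[k] k) (hpdef : ∀ a b : A, p a b = σ (a ⊗ₜ[k] (1 : H)) (b ⊗ₜ[k] (1 : H)))
    (τ : H →ₗ[k] H →ₗ[k] k) (hτdef : ∀ h g : H, τ h g = σ ((1 : A) ⊗ₜ[k] h) ((1 : A) ⊗ₜ[k] g))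
    (u : A →ₗ[k] H →ₗ[k] k) (hudef : ∀ (a : A) (h : H), u a h = σ (a ⊗ₜ[k] (1 : H)) ((1 : A) ⊗ₜ[k] h))
    (v : H →ₗ[k] A →ₗ[k] k) (hvdef : ∀ (h : H) (a : A), v h a = σ ((1 : A) ⊗ₜ[k] h) (a ⊗ₜ[k] (1 : H))) :
    IsCQT p ∧ IsCQT τ ∧ IsSkewPairing u ∧ IsSkewPairing v ∧ IsSigma u p τ v σ  := by
  -- multiplication facts
  have E1 : ∀ (a b : A) (g : H), mulD (a ⊗ₜ[k] (1 : H)) (b ⊗ₜ[k] g) = (a * b) ⊗ₜ[k] g :=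
    mulD_one_left lact ract hmp mulD hmulD
  have E2 : ∀ (a : A) (h g : H), mulD (a ⊗ₜ[k] h) ((1 : A) ⊗ₜ[k] g) = a ⊗ₜ[k] (h * g) :=
    mulD_one_right lact ract hmp mulD hmulD
  have EA : ∀ x y : A, (x * y) ⊗ₜ[k] (1 : H) = mulD (x ⊗ₜ[k] (1 : H)) (y ⊗ₜ[k] (1 : H)) :=
    fun x y => (E1 x y 1).symm
  have EH : ∀ x y : H, (1 : A) ⊗ₜ[k] (x * y) = mulD ((1 : A) ⊗ₜ[k] x) ((1 : A) ⊗ₜ[k] y) :=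
    fun x y => (E2 1 x y).symm
  have Emix : ∀ (b : A) (g : H), b ⊗ₜ[k] g = mulD (b ⊗ₜ[k] (1 : H)) ((1 : A) ⊗ₜ[k] g) := by
    intro b g; rw [E2, one_mul]
  refine ⟨⟨⟨?_, ?_, ?_, ?_⟩, ?_⟩, ⟨⟨?_, ?_, ?_, ?_⟩, ?_⟩, ⟨?_, ?_, ?_, ?_⟩, ⟨?_, ?_, ?_, ?_⟩, ?_⟩
  -- p br1
  · intro x y z rz
    rw [hpdef, EA, hσ.br1 _ _ _ (tmulRepr rz (oneRepr k H))]
    simp [tmulRepr, Finset.sum_product, oneRepr, hpdef]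
  -- p br2
  · intro z
    rw [hpdef, hσ.br2, counit_tmul_eq]
    simp
  -- p br3
  · intro x l z rx
    rw [hpdef, EA, hσ.br3 _ _ _ (tmulRepr rx (oneRepr k H))]
    simp [tmulRepr, Finset.sum_product, oneRepr, hpdef]
  -- p br4
  · intro y
    rw [hpdef, hσ.br4, counit_tmul_eq]
    simp
  -- p br5
  · intro x y rx ry
    have h5 := hσ.br5 (x ⊗ₜ[k] (1 : H)) (y ⊗ₜ[k] (1 : H))
      (tmulRepr rx (oneRepr k H)) (tmulRepr ry (oneRepr k H))
    simp only [tmulRepr, oneRepr, Finset.sum_product, Finset.univ_unique,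
      Finset.sum_singleton, E1] at h5
    have h6 := congrArg (piA k A H) h5
    simp only [map_sum, map_smul, piA_tmul, Bialgebra.counit_one, one_smul] at h6
    simp only [hpdef]
    exact h6
  -- τ br1
  · intro x y z rz
    rw [hτdef, EH, hσ.br1 _ _ _ (tmulRepr (oneRepr k A) rz)]
    simp [tmulRepr, Finset.sum_product, oneRepr, hτdef]
  -- τ br2
  · intro z
    rw [hτdef, hσ.br2, counit_tmul_eq]
    simp
  -- τ br3
  · intro x l z rx
    rw [hτdef, EH, hσ.br3 _ _ _ (tmulRepr (oneRepr k A) rx)]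
    simp [tmulRepr, Finset.sum_product, oneRepr, hτdef]
  -- τ br4
  · intro y
    rw [hτdef, hσ.br4, counit_tmul_eq]
    simp
  -- τ br5
  · intro x y rx ry
    have h5 := hσ.br5 ((1 : A) ⊗ₜ[k] x) ((1 : A) ⊗ₜ[k] y)
      (tmulRepr (oneRepr k A) rx) (tmulRepr (oneRepr k A) ry)
    simp only [tmulRepr, oneRepr, Finset.sum_product, Finset.univ_unique,
      Finset.sum_singleton, E2, one_mul] at h5
    have h6 := congrArg (piH k A H) h5
    simp only [map_sum, map_smul, piH_tmul, Bialgebra.counit_one, one_smul] at h6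
    simp only [hτdef]
    exact h6
  -- u br1
  · intro x y z rz
    rw [hudef, EA, hσ.br1 _ _ _ (tmulRepr (oneRepr k A) rz)]
    simp [tmulRepr, Finset.sum_product, oneRepr, hudef]
  -- u br2
  · intro z
    rw [hudef, hσ.br2, counit_tmul_eq]
    simp
  -- u br3
  · intro x l z rx
    rw [hudef, EH, hσ.br3 _ _ _ (tmulRepr rx (oneRepr k H))]
    simp [tmulRepr, Finset.sum_product, oneRepr, hudef]
  -- u br4
  · intro y
    rw [hudef, hσ.br4, counit_tmul_eq]
    simp
  -- v br1
  · intro x y z rz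
    rw [hvdef, EH, hσ.br1 _ _ _ (tmulRepr rz (oneRepr k H))]
    simp [tmulRepr, Finset.sum_product, oneRepr, hvdef]
  -- v br2
  · intro z
    rw [hvdef, hσ.br2, counit_tmul_eq]
    simp
  -- v br3
  · intro x l z rx
    rw [hvdef, EA, hσ.br3 _ _ _ (tmulRepr (oneRepr k A) rx)]
    simp [tmulRepr, Finset.sum_product, oneRepr, hvdef]
  -- v br4
  · intro y
    rw [hvdef, hσ.br4, counit_tmul_eq]
    simp
  -- the reconstruction formula
  · intro a b h g ra rb rh rg
    have st2 : ∀ (b' : A) (g' : H), σ (a ⊗ₜ[k] (1 : H)) (b' ⊗ₜ[k] g')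
        = ∑ m ∈ ra.index, u (ra.left m) g' * p (ra.right m) b' := by
      intro b' g'
      rw [Emix b' g', hσ.br3 _ _ _ (tmulRepr ra (oneRepr k H))]
      simp [tmulRepr, Finset.sum_product, oneRepr, hudef, hpdef]
    have st3 : ∀ (b' : A) (g' : H), σ ((1 : A) ⊗ₜ[k] h) (b' ⊗ₜ[k] g')
        = ∑ i ∈ rh.index, τ (rh.left i) g' * v (rh.right i) b' := by
      intro b' g'
      rw [Emix b' g', hσ.br3 _ _ _ (tmulRepr (oneRepr k A) rh)]
      simp [tmulRepr, Finset.sum_product, oneRepr, hτdef, hvdef]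
    have st1 : σ (a ⊗ₜ[k] h) (b ⊗ₜ[k] g)
        = ∑ n ∈ rb.index, ∑ j ∈ rg.index,
            σ (a ⊗ₜ[k] (1 : H)) (rb.left n ⊗ₜ[k] rg.left j)
              * σ ((1 : A) ⊗ₜ[k] h) (rb.right n ⊗ₜ[k] rg.right j) := by
      rw [show a ⊗ₜ[k] h = mulD (a ⊗ₜ[k] (1 : H)) ((1 : A) ⊗ₜ[k] h) from Emix a h,
        hσ.br1 _ _ _ (tmulRepr rb rg)]
      simp [tmulRepr, Finset.sum_product]
    rw [st1]
    simp_rw [st2, st3]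
    rw [final_reorder ra.index rb.index rh.index rg.index
      (fun m j => u (ra.left m) (rg.left j)) (fun m n => p (ra.right m) (rb.left n))
      (fun i j => τ (rh.left i) (rg.right j)) (fun i n => v (rh.right i) (rb.right n))]


end
end

section
/- Let k be a field of characteristic 0 and k[X] the polynomial Hopf algebra with X primitive, i.e. Δ(Xⁿ) = Σ_{j=0}^{n} C(n,j) Xʲ ⊗ X^{n−j}, ε(Xⁿ) = δ_{n,0}, S(Xⁿ) = (−1)ⁿXⁿ. For any α ∈ k, the bilinear map τ determined by τ(Xⁱ, Xʲ) = 0 if i ≠ j and τ(Xⁱ, Xⁱ) = i! αⁱ is a coquasitriangular structure on k[X]. -/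
open TensorProduct Coalgebra LinearMap Finset HopfAlgebra

noncomputable section

variable {k : Type} [Field k]

namespace PolyCQT

variable {k A : Type} [Field k] [CommRing A] [HopfAlgebra k A]

/-- `((a⊗b)⊗(c⊗d)) ↦ τ a c * τ b d`. -/
def Wmap (τ : A →ₗ[k] A →ₗ[k] k) : (A ⊗[k] A) ⊗[k] (A ⊗[k] A) →ₗ[k] k :=
  LinearMap.mul' k k ∘ₗ TensorProduct.map (TensorProduct.uncurry (RingHom.id k) A A k τ)
      (TensorProduct.uncurry (RingHom.id k) A A k τ) ∘ₗ (tensorTensorTensorComm k A A A A).toLinearMap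

@[simp] lemma Wmap_tmul (τ : A →ₗ[k] A →ₗ[k] k) (a b c d : A) :
    Wmap τ ((a ⊗ₜ[k] b) ⊗ₜ[k] (c ⊗ₜ[k] d)) = τ a c * τ b d := by
  simp [Wmap]

/-- `((a⊗b)⊗(c⊗d)) ↦ τ a d * τ b c`. -/
def W'map (τ : A →ₗ[k] A →ₗ[k] k) : (A ⊗[k] A) ⊗[k] (A ⊗[k] A) →ₗ[k] k :=
  Wmap τ ∘ₗ TensorProduct.map LinearMap.id (TensorProduct.comm k A A).toLinearMap

@[simp] lemma W'map_tmul (τ : A →ₗ[k] A →ₗ[k] k) (a b c d : A) :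
    W'map τ ((a ⊗ₜ[k] b) ⊗ₜ[k] (c ⊗ₜ[k] d)) = τ a d * τ b c := by
  simp [W'map]

/-- `((a⊗b)⊗(c⊗d)) ↦ τ a c • (b * d)`. -/
def U1map (τ : A →ₗ[k] A →ₗ[k] k) : (A ⊗[k] A) ⊗[k] (A ⊗[k] A) →ₗ[k] A :=
  (TensorProduct.lid k A).toLinearMap ∘ₗ TensorProduct.map (TensorProduct.uncurry (RingHom.id k) A A k τ)
      (LinearMap.mul' k A) ∘ₗ (tensorTensorTensorComm k A A A A).toLinearMap

@[simp] lemma U1map_tmul (τ : A →ₗ[k] A →ₗ[k] k) (a b c d : A) :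
    U1map τ ((a ⊗ₜ[k] b) ⊗ₜ[k] (c ⊗ₜ[k] d)) = τ a c • (b * d) := by
  simp [U1map]

/-- `((a⊗b)⊗(c⊗d)) ↦ τ b d • (c * a)`. -/
def U2map (τ : A →ₗ[k] A →ₗ[k] k) : (A ⊗[k] A) ⊗[k] (A ⊗[k] A) →ₗ[k] A :=
  U1map τ ∘ₗ TensorProduct.map (TensorProduct.comm k A A).toLinearMap
    (TensorProduct.comm k A A).toLinearMap

@[simp] lemma U2map_tmul (τ : A →ₗ[k] A →ₗ[k] k) (a b c d : A) :
    U2map τ ((a ⊗ₜ[k] b) ⊗ₜ[k] (c ⊗ₜ[k] d)) = τ b d • (c * a) := by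
  simp [U2map, mul_comm c a]

lemma sum_repr_right {M : Type} [AddCommGroup M] [Module k M]
    (U : (A ⊗[k] A) ⊗[k] (A ⊗[k] A) →ₗ[k] M) (t : A ⊗[k] A) (z : A) (rz : Repr0 k z) :
    ∑ i ∈ rz.index, U (t ⊗ₜ[k] (rz.left i ⊗ₜ[k] rz.right i))
      = U (t ⊗ₜ[k] comul (R := k) z) := by
  rw [← rz.eq, tmul_sum, map_sum]

lemma sum_repr_left {M : Type} [AddCommGroup M] [Module k M]
    (U : (A ⊗[k] A) ⊗[k] (A ⊗[k] A) →ₗ[k] M) (z : A) (rz : Repr0 k z) (t : A ⊗[k] A) :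
    ∑ i ∈ rz.index, U ((rz.left i ⊗ₜ[k] rz.right i) ⊗ₜ[k] t)
      = U (comul (R := k) z ⊗ₜ[k] t) := by
  rw [← rz.eq, sum_tmul, map_sum]

lemma sum_repr_both {M : Type} [AddCommGroup M] [Module k M]
    (U : (A ⊗[k] A) ⊗[k] (A ⊗[k] A) →ₗ[k] M) (u v : A) (ru : Repr0 k u) (rv : Repr0 k v) :
    ∑ i ∈ ru.index, ∑ j ∈ rv.index,
        U ((ru.left i ⊗ₜ[k] ru.right i) ⊗ₜ[k] (rv.left j ⊗ₜ[k] rv.right j))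
      = U (comul (R := k) u ⊗ₜ[k] comul (R := k) v) := by
  calc ∑ i ∈ ru.index, ∑ j ∈ rv.index,
        U ((ru.left i ⊗ₜ[k] ru.right i) ⊗ₜ[k] (rv.left j ⊗ₜ[k] rv.right j))
      = ∑ i ∈ ru.index, U ((ru.left i ⊗ₜ[k] ru.right i) ⊗ₜ[k] comul (R := k) v) :=
        Finset.sum_congr rfl fun i _ => sum_repr_right U _ v rv
    _ = U (comul (R := k) u ⊗ₜ[k] comul (R := k) v) := sum_repr_left U u ru _

lemma key_sum {k : Type} [Field k] (α : k) (p q n : ℕ) :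
    ∑ j ∈ Finset.range (n + 1), (n.choose j : k) *
      ((if p = j then (p.factorial : k) * α ^ p else 0) *
       (if q = n - j then (q.factorial : k) * α ^ q else 0))
    = if p + q = n then (((p + q).factorial : k) * α ^ (p + q)) else 0 := by
  rcases eq_or_ne (p + q) n with h | h
  · subst h
    rw [if_pos rfl, Finset.sum_eq_single p]
    · rw [if_pos rfl, if_pos (by omega : q = p + q - p)]
      have h1 := Nat.choose_mul_factorial_mul_factorial (Nat.le_add_right p q)
      rw [show p + q - p = q from by omega] at h1
      calc ((p + q).choose p : k) * ((p.factorial : k) * α ^ p * ((q.factorial : k) * α ^ q))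
          = (((p + q).choose p * p.factorial * q.factorial : ℕ) : k) * (α ^ p * α ^ q) := by
            push_cast; ring
        _ = _ := by rw [h1, ← pow_add]
    · intro j _ hne
      rw [if_neg (fun hh => hne hh.symm), zero_mul, mul_zero]
    · intro hp
      exact absurd (Finset.mem_range.mpr (by omega)) hp
  · rw [if_neg h]
    refine Finset.sum_eq_zero fun j hj => ?_
    have hj' : j ≤ n := by
      have := Finset.mem_range.mp hj; omega
    by_cases h1 : p = j
    · by_cases h2 : q = n - j
      · exact absurd (by omega : p + q = n) h
      · rw [if_neg h2, mul_zero, mul_zero]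
    · rw [if_neg h1, zero_mul, mul_zero]

lemma key_sum' {k : Type} [Field k] (α : k) (a b m : ℕ) :
    ∑ j ∈ Finset.range (m + 1), (m.choose j : k) *
      ((if j = b then (j.factorial : k) * α ^ j else 0) *
       (if m - j = a then ((m - j).factorial : k) * α ^ (m - j) else 0))
    = if m = a + b then ((m.factorial : k) * α ^ m) else 0 := by
  rcases eq_or_ne m (a + b) with h | h
  · subst h
    rw [if_pos rfl, Finset.sum_eq_single b]
    · rw [show a + b - b = a from by omega, if_pos rfl, if_pos rfl]
      have h1 := Nat.choose_mul_factorial_mul_factorial (by omega : b ≤ a + b)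
      rw [show a + b - b = a from by omega] at h1
      calc ((a + b).choose b : k) * ((b.factorial : k) * α ^ b * ((a.factorial : k) * α ^ a))
          = (((a + b).choose b * b.factorial * a.factorial : ℕ) : k) * (α ^ b * α ^ a) := by
            push_cast; ring
        _ = _ := by rw [h1, ← pow_add, add_comm b a]
    · intro j _ hne
      rw [if_neg hne, zero_mul, mul_zero]
    · intro hp
      exact absurd (Finset.mem_range.mpr (by omega)) hp
  · rw [if_neg h]
    refine Finset.sum_eq_zero fun j hj => ?_
    have hj' : j ≤ m := by
      have := Finset.mem_range.mp hj; omega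
    by_cases h1 : j = b
    · by_cases h2 : m - j = a
      · exact absurd (by omega : m = a + b) h
      · rw [if_neg h2, mul_zero, mul_zero]
    · rw [if_neg h1, zero_mul, mul_zero]

end PolyCQT

open PolyCQT in
/-- on the polynomial Hopf algebra `k[X]` (char `k = 0`, `X` primitive),
`τ(Xⁱ, Xʲ) = δ_{ij} i! αⁱ` is a coquasitriangular structure, for any `α ∈ k`. -/
theorem polynomial_hopf_cqt {k A : Type} [Field k] [CharZero k] [CommRing A]
    [HopfAlgebra k A]
    (x : A) (hxΔ : comul (R := k) x = x ⊗ₜ[k] 1 + 1 ⊗ₜ[k] x)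
    (hxε : counit (R := k) x = 0)
    (hxS : ∀ n : ℕ, antipode (R := k) (x ^ n) = (-1 : A) ^ n * x ^ n)
    (B : Module.Basis ℕ k A) (hB : ∀ n : ℕ, B n = x ^ n)
    (α : k) (τ : A →ₗ[k] A →ₗ[k] k)
    (hτ : ∀ i j : ℕ, τ (x ^ i) (x ^ j) = if i = j then (i.factorial : k) * α ^ i else 0) :
    IsCQT τ := by
  -- comultiplication and counit on powers of x
  have hdelta : ∀ n : ℕ, Coalgebra.comul (R := k) (x ^ n)
      = ∑ j ∈ Finset.range (n + 1), (n.choose j : k) • ((x ^ j : A) ⊗ₜ[k] (x ^ (n - j) : A)) := by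
    intro n
    have h1 : Coalgebra.comul (R := k) (x ^ n) = (Bialgebra.comulAlgHom k A x) ^ n := by
      rw [← map_pow]; simp
    rw [h1, show Bialgebra.comulAlgHom k A x = x ⊗ₜ[k] 1 + 1 ⊗ₜ[k] x by simpa using hxΔ,
      add_pow]
    refine Finset.sum_congr rfl fun j hj => ?_
    rw [Algebra.TensorProduct.tmul_pow, Algebra.TensorProduct.tmul_pow,
      Algebra.TensorProduct.tmul_mul_tmul]
    simp only [one_pow, mul_one, one_mul]
    rw [mul_comm, ← nsmul_eq_mul, Nat.cast_smul_eq_nsmul]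
  have heps : ∀ n : ℕ, Coalgebra.counit (R := k) (x ^ n) = if n = 0 then 1 else 0 := by
    intro n
    have h1 : Coalgebra.counit (R := k) (x ^ n) = (Bialgebra.counitAlgHom k A x) ^ n := by
      rw [← map_pow]; simp
    rw [h1, show Bialgebra.counitAlgHom k A x = 0 by simpa using hxε, zero_pow_eq]
  -- cocommutativity
  have hcoc : ∀ z : A, (TensorProduct.comm k A A) (Coalgebra.comul (R := k) z)
      = Coalgebra.comul (R := k) z := by
    have h : (TensorProduct.comm k A A).toLinearMap ∘ₗ
        (Coalgebra.comul : A →ₗ[k] A ⊗[k] A) = (Coalgebra.comul : A →ₗ[k] A ⊗[k] A) := by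
      refine B.ext fun n => ?_
      rw [LinearMap.comp_apply, LinearEquiv.coe_coe, hB, hdelta, map_sum]
      simp only [map_smul, TensorProduct.comm_tmul]
      rw [← Finset.sum_range_reflect
        (fun j => (n.choose j : k) • ((x ^ j : A) ⊗ₜ[k] (x ^ (n - j) : A))) (n + 1)]
      refine Finset.sum_congr rfl fun j hj => ?_
      have hj' : j ≤ n := by have := Finset.mem_range.mp hj; omega
      simp only [Nat.add_sub_cancel]
      rw [Nat.choose_symm hj', Nat.sub_sub_self hj']
    intro z
    exact LinearMap.congr_fun h z
  -- (BR1) core identity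
  have main1 : ∀ u v w : A, τ (u * v) w = Wmap τ ((u ⊗ₜ[k] v) ⊗ₜ[k] Coalgebra.comul (R := k) w) := by
    have h : (LinearMap.mul k A).compr₂ τ
        = TensorProduct.curry ((TensorProduct.curry (Wmap τ)).compl₂
            (Coalgebra.comul : A →ₗ[k] A ⊗[k] A)) := by
      refine B.ext fun p => B.ext fun q => B.ext fun n => ?_
      simp only [hB, LinearMap.compr₂_apply, LinearMap.mul_apply', TensorProduct.curry_apply,
        LinearMap.compl₂_apply]
      rw [← pow_add, hτ, hdelta, tmul_sum, map_sum]
      simp only [tmul_smul, map_smul, Wmap_tmul, hτ, smul_eq_mul]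
      rw [key_sum]
    intro u v w
    have := LinearMap.congr_fun (LinearMap.congr_fun (LinearMap.congr_fun h u) v) w
    simpa using this
  -- (BR3) core identity
  have main3 : ∀ l z u : A,
      τ u (l * z) = W'map τ (Coalgebra.comul (R := k) u ⊗ₜ[k] (l ⊗ₜ[k] z)) := by
    have h : (LinearMap.mul k A).compr₂ τ.flip
        = TensorProduct.curry ((TensorProduct.curry (W'map τ) ∘ₗ
            (Coalgebra.comul : A →ₗ[k] A ⊗[k] A)).flip) := by
      refine B.ext fun a => B.ext fun b => B.ext fun m => ?_
      simp only [hB, LinearMap.compr₂_apply, LinearMap.mul_apply', TensorProduct.curry_apply,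
        LinearMap.flip_apply, LinearMap.comp_apply]
      rw [← pow_add, hτ, hdelta, sum_tmul, map_sum]
      simp only [smul_tmul', map_smul, W'map_tmul, LinearMap.smul_apply, hτ, smul_eq_mul,
        mul_assoc]
      rw [key_sum']
    intro l z u
    have := LinearMap.congr_fun (LinearMap.congr_fun (LinearMap.congr_fun h l) z) u
    simpa using this
  -- (BR2)
  have hbr2 : ∀ z : A, τ 1 z = Coalgebra.counit (R := k) z := by
    have h : τ (1 : A) = (Coalgebra.counit : A →ₗ[k] k) := by
      refine B.ext fun n => ?_
      rw [hB, show (1 : A) = x ^ 0 from (pow_zero x).symm, hτ, heps]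
      simp [eq_comm]
    exact fun z => LinearMap.congr_fun h z
  -- (BR4)
  have hbr4 : ∀ y : A, τ y 1 = Coalgebra.counit (R := k) y := by
    have h : τ.flip (1 : A) = (Coalgebra.counit : A →ₗ[k] k) := by
      refine B.ext fun n => ?_
      rw [hB, LinearMap.flip_apply, show (1 : A) = x ^ 0 from (pow_zero x).symm, hτ, heps]
      split_ifs with h
      · subst h; simp
      · rfl
    exact fun y => LinearMap.congr_fun h y
  refine ⟨⟨?_, hbr2, ?_, hbr4⟩, ?_⟩
  · -- BR1
    intro u v z rz
    rw [main1 u v z, ← sum_repr_right (Wmap τ) (u ⊗ₜ[k] v) z rz]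
    simp
  · -- BR3
    intro u l z ru
    rw [main3 l z u, ← sum_repr_left (W'map τ) u ru (l ⊗ₜ[k] z)]
    simp
  · -- BR5
    intro u v ru rv
    calc ∑ i ∈ ru.index, ∑ j ∈ rv.index,
          τ (ru.left i) (rv.left j) • (ru.right i * rv.right j)
        = ∑ i ∈ ru.index, ∑ j ∈ rv.index,
            U1map τ ((ru.left i ⊗ₜ[k] ru.right i) ⊗ₜ[k] (rv.left j ⊗ₜ[k] rv.right j)) := by
          simp
      _ = U1map τ (Coalgebra.comul (R := k) u ⊗ₜ[k] Coalgebra.comul (R := k) v) :=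
          sum_repr_both (U1map τ) u v ru rv
      _ = U2map τ (Coalgebra.comul (R := k) u ⊗ₜ[k] Coalgebra.comul (R := k) v) := by
          have h2 : U2map τ (Coalgebra.comul (R := k) u ⊗ₜ[k] Coalgebra.comul (R := k) v)
              = U1map τ ((TensorProduct.comm k A A (Coalgebra.comul (R := k) u)) ⊗ₜ[k]
                  (TensorProduct.comm k A A (Coalgebra.comul (R := k) v))) := by
            simp [U2map]
          rw [h2, hcoc, hcoc]
      _ = ∑ i ∈ ru.index, ∑ j ∈ rv.index,
            U2map τ ((ru.left i ⊗ₜ[k] ru.right i) ⊗ₜ[k] (rv.left j ⊗ₜ[k] rv.right j)) :=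
          (sum_repr_both (U2map τ) u v ru rv).symm
      _ = ∑ i ∈ ru.index, ∑ j ∈ rv.index,
            τ (ru.right i) (rv.right j) • (rv.left j * ru.left i) := by
          simp


end
end

section
/- Let A ⋈ H be a double cross product with coquasitriangular structure σ, and set v(h, a) = σ(1 ⊗ h, a ⊗ 1) and u(a, h) = σ(a ⊗ 1, 1 ⊗ h). Then the following 'compatibility with actions' identities hold for all a, b ∈ A and g, h ∈ H: v(h₍₁₎, b₍₁₎)(h₍₂₎ ⊲ b₍₂₎) = h₍₁₎ v(h₍₂₎, b) in H, and (g₍₁₎ ⊲ a₍₁₎) u(a₍₂₎, g₍₂₎) = u(a, g₍₁₎) g₍₂₎ in H. -/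
set_option synthInstance.maxHeartbeats 1000000
set_option maxHeartbeats 1000000


open TensorProduct Coalgebra LinearMap Finset HopfAlgebra

noncomputable section

variable {k : Type} [Field k]

abbrev Repr0' (k : Type) [CommSemiring k] {A : Type} [AddCommMonoid A] [Module k A]
    [CoalgebraStruct k A] (a : A) := Repr0 k a

namespace DCPaux

def arb {A : Type} [AddCommGroup A] [Module k A] [Coalgebra k A] (a : A) : Repr0' k a where
  ι := A × A
  index := (ℛ k a).index
  left := (ℛ k a).left
  right := (ℛ k a).right
  eq := (ℛ k a).eq

lemma sum_counit_smul {A : Type} [AddCommGroup A] [Module k A] [Coalgebra k A]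
    {a : A} (r : Repr0' k a) :
    ∑ i ∈ r.index, counit (R := k) (r.left i) • r.right i = a := by
  calc ∑ i ∈ r.index, counit (R := k) (r.left i) • r.right i
      = TensorProduct.lid k A (∑ i ∈ r.index, counit (R := k) (r.left i) ⊗ₜ r.right i) := by
        rw [map_sum]; simp
    _ = a := by rw [show _ = (1 : k) ⊗ₜ[k] a from Coalgebra.sum_counit_tmul_eq (R := k) (⟨r.index, r.left, r.right, r.eq⟩ : Coalgebra.Repr k a r.ι)]; simp

lemma sum_smul_counit {A : Type} [AddCommGroup A] [Module k A] [Coalgebra k A]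
    {a : A} (r : Repr0' k a) :
    ∑ i ∈ r.index, counit (R := k) (r.right i) • r.left i = a := by
  calc ∑ i ∈ r.index, counit (R := k) (r.right i) • r.left i
      = TensorProduct.rid k A (∑ i ∈ r.index, r.left i ⊗ₜ counit (R := k) (r.right i)) := by
        rw [map_sum]; simp
    _ = a := by rw [show _ = a ⊗ₜ[k] (1 : k) from Coalgebra.sum_tmul_counit_eq (R := k) (⟨r.index, r.left, r.right, r.eq⟩ : Coalgebra.Repr k a r.ι)]; simp

def onerep (A : Type) [Ring A] [Bialgebra k A] : Repr0' k (1 : A) where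
  ι := Unit
  index := {Unit.unit}
  left _ := 1
  right _ := 1
  eq := by simp [Algebra.TensorProduct.one_def]

def lrep {A H : Type} [Ring A] [Ring H] [Bialgebra k A] [Bialgebra k H]
    {h : H} (rh : Repr0' k h) : Repr0' k ((1 : A) ⊗ₜ[k] h) where
  ι := rh.ι
  index := rh.index
  left i := (1 : A) ⊗ₜ rh.left i
  right i := (1 : A) ⊗ₜ rh.right i
  eq := by
    show _ = TensorProduct.tensorTensorTensorComm k A A H H
      (comul (R := k) (1:A) ⊗ₜ comul (R := k) h)
    rw [Bialgebra.comul_one, ← rh.eq, Algebra.TensorProduct.one_def]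
    simp [TensorProduct.tmul_sum, map_sum]

def rrep {A H : Type} [Ring A] [Ring H] [Bialgebra k A] [Bialgebra k H]
    {a : A} (ra : Repr0' k a) : Repr0' k (a ⊗ₜ[k] (1 : H)) where
  ι := ra.ι
  index := ra.index
  left i := ra.left i ⊗ₜ (1 : H)
  right i := ra.right i ⊗ₜ (1 : H)
  eq := by
    show _ = TensorProduct.tensorTensorTensorComm k A A H H
      (comul (R := k) a ⊗ₜ comul (R := k) (1:H))
    rw [Bialgebra.comul_one, ← ra.eq, Algebra.TensorProduct.one_def]
    simp [TensorProduct.sum_tmul, map_sum]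

end DCPaux

/-- compatibility with the right action for the maps `u`, `v` obtained from
a coquasitriangular structure `σ` on a double cross product `A ⋈ H`:
`v(h₍₁₎, b₍₁₎)(h₍₂₎ ⊲ b₍₂₎) = h₍₁₎ v(h₍₂₎, b)` and
`(g₍₁₎ ⊲ a₍₁₎) u(a₍₂₎, g₍₂₎) = u(a, g₍₁₎) g₍₂₎`. -/
theorem double_cross_product_action_compatibilities {k A H : Type} [Field k] [Ring A] [Ring H]
    [HopfAlgebra k A] [HopfAlgebra k H]
    (lact : H →ₗ[k] A →ₗ[k] A) (ract : H →ₗ[k] A →ₗ[k] H)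
    (hmp : IsMatchedPair lact ract)
    (mulD : A ⊗[k] H →ₗ[k] A ⊗[k] H →ₗ[k] A ⊗[k] H) (hmulD : IsDCPMul lact ract mulD)
    (σ : A ⊗[k] H →ₗ[k] A ⊗[k] H →ₗ[k] k)
    (hσ : IsCQTMul mulD ((1 : A) ⊗ₜ[k] (1 : H)) σ)
    (u : A →ₗ[k] H →ₗ[k] k) (hudef : ∀ (a : A) (h : H), u a h = σ (a ⊗ₜ[k] (1 : H)) ((1 : A) ⊗ₜ[k] h))
    (v : H →ₗ[k] A →ₗ[k] k) (hvdef : ∀ (h : H) (a : A), v h a = σ ((1 : A) ⊗ₜ[k] h) (a ⊗ₜ[k] (1 : H))) :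
    (∀ (h : H) (b : A) (rh : Repr0 k h) (rb : Repr0 k b),
      ∑ i ∈ rh.index, ∑ j ∈ rb.index,
          v (rh.left i) (rb.left j) • ract (rh.right i) (rb.right j)
        = ∑ i ∈ rh.index, v (rh.right i) b • rh.left i) ∧
    (∀ (a : A) (g : H) (ra : Repr0 k a) (rg : Repr0 k g),
      ∑ i ∈ rg.index, ∑ j ∈ ra.index,
          u (ra.right j) (rg.right i) • ract (rg.left i) (ra.left j)
        = ∑ i ∈ rg.index, u a (rg.left i) • rg.right i) := by
  classical
  obtain ⟨φ, hφ⟩ : ∃ φ : A ⊗[k] H →ₗ[k] H,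
      ∀ (x : A) (y : H), φ (x ⊗ₜ[k] y) = counit (R := k) x • y :=
    ⟨(TensorProduct.lid k H).toLinearMap ∘ₗ
      TensorProduct.map (counit (R := k)) LinearMap.id, fun x y => by simp⟩
  have hm1 : ∀ (h' : H) (b' : A),
      φ (mulD ((1:A) ⊗ₜ[k] h') (b' ⊗ₜ[k] (1:H))) = ract h' b' := by
    intro h' b'
    rw [hmulD 1 b' h' 1 (DCPaux.arb h') (DCPaux.arb b')]
    simp only [map_sum, hφ, one_mul, mul_one, hmp.lact_counit]
    calc ∑ i ∈ (DCPaux.arb h').index, ∑ j ∈ (DCPaux.arb b').index,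
          (counit (R:=k) ((DCPaux.arb h').left i) * counit (R:=k) ((DCPaux.arb b').left j)) •
            ract ((DCPaux.arb h').right i) ((DCPaux.arb b').right j)
        = ract (∑ i ∈ (DCPaux.arb h').index, counit (R:=k) ((DCPaux.arb h').left i) • (DCPaux.arb h').right i)
            (∑ j ∈ (DCPaux.arb b').index, counit (R:=k) ((DCPaux.arb b').left j) • (DCPaux.arb b').right j) := by
          simp only [map_sum, LinearMap.sum_apply, map_smul, LinearMap.smul_apply,
            Finset.smul_sum, smul_smul]
          rw [Finset.sum_comm]
          simp [mul_comm]
          rfl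
      _ = ract h' b' := by rw [DCPaux.sum_counit_smul, DCPaux.sum_counit_smul]
  have hm2 : ∀ (a' : A) (g' : H),
      φ (mulD (a' ⊗ₜ[k] (1:H)) ((1:A) ⊗ₜ[k] g')) = counit (R := k) a' • g' := by
    intro a' g'
    rw [hmulD a' 1 1 g' (DCPaux.onerep H) (DCPaux.onerep A)]
    simp [DCPaux.onerep, hmp.lact_unit, hmp.ract_unit, hφ]
  constructor
  · intro h b rh rb
    have E := congrArg φ
      (hσ.br5 ((1:A) ⊗ₜ[k] h) (b ⊗ₜ[k] (1:H)) (DCPaux.lrep rh) (DCPaux.rrep rb))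
    simp only [DCPaux.lrep, DCPaux.rrep, map_sum, map_smul, hm1, hm2, ← hvdef] at E
    refine E.trans ?_
    refine Finset.sum_congr rfl fun i _ => ?_
    simp only [smul_smul]
    rw [← Finset.sum_smul]
    congr 1
    conv_rhs => rw [← DCPaux.sum_counit_smul rb]
    simp [map_sum, map_smul, smul_eq_mul, mul_comm]
  · intro a g ra rg
    have E := congrArg φ
      (hσ.br5 (a ⊗ₜ[k] (1:H)) ((1:A) ⊗ₜ[k] g) (DCPaux.rrep ra) (DCPaux.lrep rg))
    simp only [DCPaux.lrep, DCPaux.rrep, map_sum, map_smul, hm1, hm2, ← hudef] at E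
    refine (Finset.sum_comm.trans (E.symm.trans Finset.sum_comm)).trans ?_
    refine Finset.sum_congr rfl fun i _ => ?_
    simp only [smul_smul]
    rw [← Finset.sum_smul]
    congr 1
    conv_rhs => rw [← DCPaux.sum_smul_counit ra]
    simp [map_sum, LinearMap.sum_apply, map_smul, LinearMap.smul_apply, smul_eq_mul, mul_comm]

end
end
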